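/- Under Conditions 1 and 2, the rescaled variance of the energy increment converges: lim_{h → 0} σ²(h)/h⁴ = Σ, where Σ = ∫ α(x)² e^{−H(x)} dx (and likewise lim_{h → 0} s²(h)/h⁴ = Σ). -/

import Mathlib

open MeasureTheory Filter

private lemma exp_diff_le_aux (a b : ℝ) :
    |Real.exp a - Real.exp b| ≤ |a - b| * (Real.exp a + Real.exp b) := by
  rcases le_total a b with hab | hab
  · have e1 : Real.exp (a-b) * Real.exp b = Real.exp a := by rw [← Real.exp_add]; ring_nf
    rw [abs_of_nonpos (by simp [Real.exp_le_exp, hab]), abs_of_nonpos (by linarith)]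
    nlinarith [Real.add_one_le_exp (a-b), Real.exp_pos a, Real.exp_pos b]
  · have e1 : Real.exp (b-a) * Real.exp a = Real.exp b := by rw [← Real.exp_add]; ring_nf
    rw [abs_of_nonneg (by simp [Real.exp_le_exp, hab]), abs_of_nonneg (by linarith)]
    nlinarith [Real.add_one_le_exp (b-a), Real.exp_pos a, Real.exp_pos b]

/-- Proposition `thm:2musig`, variance part.
Under Condition 1 (`Δ(x,h) = h²α(x) + h²ρ(x,h)` with `ρ(x,h) → 0` as `h → 0`)
and Condition 2 (`sup_{0<h≤1} Δ(x,h)²/h⁴ ≤ D(x)` with `∫ D e^{-H} < ∞`),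
the rescaled second moment and variance of the energy increment converge:
`lim_{h→0} s²(h)/h⁴ = Σ` and `lim_{h→0} σ²(h)/h⁴ = Σ`, where
`Σ = ∫ α(x)² e^{-H(x)} dx`. -/
theorem stmt_4 (m : ℕ) (hm : 0 < m)
    (H : ((Fin m → ℝ) × (Fin m → ℝ)) → ℝ) (hHmeas : Measurable H)
    (hHS : ∀ x : (Fin m → ℝ) × (Fin m → ℝ), H (x.1, -x.2) = H x)
    (hHnorm : ∫ x : (Fin m → ℝ) × (Fin m → ℝ), Real.exp (-H x) = 1)
    (ψ : ℝ → ((Fin m → ℝ) × (Fin m → ℝ)) ≃ ((Fin m → ℝ) × (Fin m → ℝ)))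
    (hψmeas : ∀ h ∈ Set.Ioc (0:ℝ) 1, Measurable (ψ h))
    (hψvol : ∀ h ∈ Set.Ioc (0:ℝ) 1, MeasurePreserving (ψ h) volume volume)
    (hψrev : ∀ h ∈ Set.Ioc (0:ℝ) 1, ∀ x : (Fin m → ℝ) × (Fin m → ℝ),
      (((ψ h).symm (x.1, -x.2)).1, -((ψ h).symm (x.1, -x.2)).2) = ψ h x)
    -- Condition 1
    (α : ((Fin m → ℝ) × (Fin m → ℝ)) → ℝ) (ρ : ((Fin m → ℝ) × (Fin m → ℝ)) → ℝ → ℝ)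
    (hcond1 : ∀ x, ∀ h ∈ Set.Ioc (0:ℝ) 1,
      H (ψ h x) - H x = h ^ 2 * α x + h ^ 2 * ρ x h)
    (hρ : ∀ x, Tendsto (ρ x) (nhdsWithin 0 (Set.Ioi 0)) (nhds 0))
    -- Condition 2
    (D : ((Fin m → ℝ) × (Fin m → ℝ)) → ℝ)
    (hcond2 : ∀ x, ∀ h ∈ Set.Ioc (0:ℝ) 1, (H (ψ h x) - H x) ^ 2 / h ^ 4 ≤ D x)
    (hD : Integrable (fun x => D x * Real.exp (-H x))) :
    -- `lim s²(h)/h⁴ = Σ`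
    Tendsto (fun h : ℝ => (∫ x, (H (ψ h x) - H x) ^ 2 * Real.exp (-H x)) / h ^ 4)
      (nhdsWithin 0 (Set.Ioi 0)) (nhds (∫ x, (α x) ^ 2 * Real.exp (-H x))) ∧
    -- `lim σ²(h)/h⁴ = Σ`
    Tendsto (fun h : ℝ =>
        ((∫ x, (H (ψ h x) - H x) ^ 2 * Real.exp (-H x)) -
          (∫ x, (H (ψ h x) - H x) * Real.exp (-H x)) ^ 2) / h ^ 4)
      (nhdsWithin 0 (Set.Ioi 0)) (nhds (∫ x, (α x) ^ 2 * Real.exp (-H x))) := by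
  classical
  set w : ((Fin m → ℝ) × (Fin m → ℝ)) → ℝ := fun x => Real.exp (-H x) with hwdef
  have hwpos : ∀ x, 0 < w x := fun x => Real.exp_pos _
  have hwmeas : Measurable w := Real.measurable_exp.comp hHmeas.neg
  have hwInt : Integrable w := by
    by_contra hc
    rw [integral_undef hc] at hHnorm
    norm_num at hHnorm
  have hIoc : Set.Ioc (0:ℝ) 1 ∈ nhdsWithin (0:ℝ) (Set.Ioi 0) :=
    Ioc_mem_nhdsGT_of_mem (by norm_num)
  have hDnn : ∀ x, 0 ≤ D x := by
    intro x
    have := hcond2 x 1 (by norm_num)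
    have h0 : (0:ℝ) ≤ (H (ψ 1 x) - H x) ^ 2 / 1 ^ 4 := by positivity
    linarith
  have hΔsq : ∀ h ∈ Set.Ioc (0:ℝ) 1, ∀ x, (H (ψ h x) - H x) ^ 2 ≤ h ^ 4 * D x := by
    intro h hh x
    have h4 : (0:ℝ) < h ^ 4 := pow_pos hh.1 4
    have h1 := hcond2 x h hh
    calc (H (ψ h x) - H x) ^ 2 = ((H (ψ h x) - H x) ^ 2 / h ^ 4) * h ^ 4 := by
          rw [div_mul_cancel₀ _ h4.ne']
      _ ≤ D x * h ^ 4 := mul_le_mul_of_nonneg_right h1 h4.le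
      _ = h ^ 4 * D x := mul_comm _ _
  -- Part A : convergence of the second moment
  have hA : Tendsto (fun h : ℝ => ∫ x, (H (ψ h x) - H x) ^ 2 / h ^ 4 * w x)
      (nhdsWithin (0:ℝ) (Set.Ioi 0)) (nhds (∫ x, (α x) ^ 2 * w x)) := by
    apply tendsto_integral_filter_of_dominated_convergence (fun x => D x * w x)
    · filter_upwards [hIoc] with h hh
      exact (((((hHmeas.comp (hψmeas h hh)).sub hHmeas).pow_const 2).div_const
        (h ^ 4)).mul hwmeas).aestronglyMeasurable
    · filter_upwards [hIoc] with h hh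
      refine Eventually.of_forall fun x => ?_
      have hnn : (0:ℝ) ≤ (H (ψ h x) - H x) ^ 2 / h ^ 4 * w x := by
        have := (hwpos x).le
        positivity
      rw [Real.norm_eq_abs, abs_of_nonneg hnn]
      exact mul_le_mul_of_nonneg_right (hcond2 x h hh) (hwpos x).le
    · exact hD
    · refine Eventually.of_forall fun x => ?_
      have hev : ∀ᶠ h in nhdsWithin (0:ℝ) (Set.Ioi 0),
          (α x + ρ x h) ^ 2 * w x = (H (ψ h x) - H x) ^ 2 / h ^ 4 * w x := by
        filter_upwards [hIoc] with h hh
        rw [hcond1 x h hh]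
        have hne : h ≠ 0 := ne_of_gt hh.1
        have : (h ^ 2 * α x + h ^ 2 * ρ x h) ^ 2 / h ^ 4 = (α x + ρ x h) ^ 2 := by
          field_simp
        rw [this]
      refine Tendsto.congr' hev ?_
      have h1 : Tendsto (fun h : ℝ => (α x + ρ x h) ^ 2 * w x)
          (nhdsWithin (0:ℝ) (Set.Ioi 0)) (nhds ((α x + 0) ^ 2 * w x)) :=
        ((tendsto_const_nhds.add (hρ x)).pow 2).mul_const (w x)
      simpa using h1
  have first : Tendsto (fun h : ℝ => (∫ x, (H (ψ h x) - H x) ^ 2 * w x) / h ^ 4)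
      (nhdsWithin (0:ℝ) (Set.Ioi 0)) (nhds (∫ x, (α x) ^ 2 * w x)) := by
    have heq : (fun h : ℝ => (∫ x, (H (ψ h x) - H x) ^ 2 * w x) / h ^ 4)
        = fun h : ℝ => ∫ x, (H (ψ h x) - H x) ^ 2 / h ^ 4 * w x := by
      funext h
      rw [← integral_div]
      congr 1
      funext x
      ring
    rw [heq]
    exact hA
  -- Part B : the key bound on the mean |μ(h)| ≤ h⁴ ∫ D w
  have key : ∀ h ∈ Set.Ioc (0:ℝ) 1,
      |∫ x, (H (ψ h x) - H x) * w x| ≤ h ^ 4 * ∫ x, D x * w x := by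
    intro h hh
    set Δ : ((Fin m → ℝ) × (Fin m → ℝ)) → ℝ := fun x => H (ψ h x) - H x with hΔdef
    have hΔmeas : Measurable Δ := (hHmeas.comp (hψmeas h hh)).sub hHmeas
    have hh4 : (0:ℝ) < h ^ 4 := pow_pos hh.1 4
    have hh41 : h ^ 4 ≤ 1 := pow_le_one₀ hh.1.le hh.2
    -- the flip map S as a measurable equivalence
    let Se : ((Fin m → ℝ) × (Fin m → ℝ)) ≃ᵐ ((Fin m → ℝ) × (Fin m → ℝ)) :=
      (MeasurableEquiv.refl _).prodCongr (Homeomorph.neg (Fin m → ℝ)).toMeasurableEquiv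
    have hSe : ∀ x : ((Fin m → ℝ) × (Fin m → ℝ)), Se x = (x.1, -x.2) := fun _ => rfl
    have hSmp : MeasurePreserving Se volume volume := by
      have : (⇑Se) = fun x : ((Fin m → ℝ) × (Fin m → ℝ)) => (x.1, -x.2) := rfl
      rw [this, Measure.volume_eq_prod]
      exact (MeasurePreserving.id _).prod (Measure.measurePreserving_neg _)
    -- formula for the inverse of ψ h
    have hsymmS : ∀ x, (ψ h).symm (x.1, -x.2) = ((ψ h x).1, -(ψ h x).2) := by
      intro x
      have h1 := hψrev h hh x
      have h2 := congrArg (fun p : ((Fin m → ℝ) × (Fin m → ℝ)) => (p.1, -p.2)) h1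
      simpa using h2
    have hsymm : ∀ y, (ψ h).symm y = ((ψ h (y.1, -y.2)).1, -(ψ h (y.1, -y.2)).2) := by
      intro y
      have := hsymmS (y.1, -y.2)
      simpa using this
    have hsymmmeas : Measurable ((ψ h).symm) := by
      have hc : Measurable fun y : ((Fin m → ℝ) × (Fin m → ℝ)) => (y.1, -y.2) :=
        measurable_fst.prodMk measurable_snd.neg
      have : (⇑(ψ h).symm) = (fun p : ((Fin m → ℝ) × (Fin m → ℝ)) => (p.1, -p.2))
          ∘ (ψ h) ∘ (fun y : ((Fin m → ℝ) × (Fin m → ℝ)) => (y.1, -y.2)) := by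
        funext y
        exact hsymm y
      rw [this]
      exact hc.comp ((hψmeas h hh).comp hc)
    let ψe : ((Fin m → ℝ) × (Fin m → ℝ)) ≃ᵐ ((Fin m → ℝ) × (Fin m → ℝ)) :=
      { toEquiv := ψ h, measurable_toFun := hψmeas h hh, measurable_invFun := hsymmmeas }
    have hψemp : MeasurePreserving ψe volume volume := hψvol h hh
    -- ψ h ∘ S = S ∘ (ψ h)⁻¹
    have hψS : ∀ y, ψ h (y.1, -y.2) = (((ψ h).symm y).1, -((ψ h).symm y).2) := by
      intro y
      rw [hsymm y]
      simp
    -- key pointwise flips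
    have hflip : ∀ x, Δ ((ψ h x).1, -(ψ h x).2) = -Δ x := by
      intro x
      have h1 : ψ h (((ψ h x).1, -(ψ h x).2)) = (x.1, -x.2) := by
        have := hψS (ψ h x)
        rw [Equiv.symm_apply_apply] at this
        exact this
      show H (ψ h (((ψ h x).1, -(ψ h x).2))) - H (((ψ h x).1, -(ψ h x).2))
          = -(H (ψ h x) - H x)
      rw [h1, hHS x, hHS (ψ h x)]
      ring
    have hwflip : ∀ x, w ((ψ h x).1, -(ψ h x).2) = w (ψ h x) := by
      intro x
      simp only [hwdef, hHS]
    -- integrability of Δ·w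
    have hΔabs : ∀ x, |Δ x| ≤ 1 + D x := by
      intro x
      have h1 : Δ x ^ 2 ≤ D x := by
        calc Δ x ^ 2 = (H (ψ h x) - H x) ^ 2 := rfl
          _ ≤ h ^ 4 * D x := hΔsq h hh x
          _ ≤ 1 * D x := mul_le_mul_of_nonneg_right hh41 (hDnn x)
          _ = D x := one_mul _
      nlinarith [sq_nonneg (|Δ x| - 1), sq_abs (Δ x), abs_nonneg (Δ x)]
    have hkInt : Integrable (fun x => Δ x * w x) := by
      refine Integrable.mono' (hwInt.add hD) ((hΔmeas.mul hwmeas).aestronglyMeasurable) ?_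
      refine Eventually.of_forall fun x => ?_
      rw [Real.norm_eq_abs, abs_mul, abs_of_nonneg (hwpos x).le]
      calc |Δ x| * w x ≤ (1 + D x) * w x :=
            mul_le_mul_of_nonneg_right (hΔabs x) (hwpos x).le
        _ = w x + D x * w x := by ring
    -- integrability of Δ²·w and its bound
    have hΔ2Int : Integrable (fun x => Δ x ^ 2 * w x) := by
      refine Integrable.mono' (hD.const_mul (h ^ 4))
        (((hΔmeas.pow_const 2).mul hwmeas).aestronglyMeasurable) ?_
      refine Eventually.of_forall fun x => ?_
      rw [Real.norm_eq_abs, abs_of_nonneg (by positivity)]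
      calc Δ x ^ 2 * w x ≤ (h ^ 4 * D x) * w x :=
            mul_le_mul_of_nonneg_right (hΔsq h hh x) (hwpos x).le
        _ = h ^ 4 * (D x * w x) := by ring
    have hΔ2le : ∫ x, Δ x ^ 2 * w x ≤ h ^ 4 * ∫ x, D x * w x := by
      rw [← integral_const_mul]
      refine integral_mono hΔ2Int (hD.const_mul (h ^ 4)) fun x => ?_
      calc Δ x ^ 2 * w x ≤ (h ^ 4 * D x) * w x :=
            mul_le_mul_of_nonneg_right (hΔsq h hh x) (hwpos x).le
        _ = h ^ 4 * (D x * w x) := by ring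
    -- the transported integrands
    have hgk : ∀ x, Δ x * w (ψ h x)
        = (fun y : ((Fin m → ℝ) × (Fin m → ℝ)) => -(Δ (y.1, -y.2) * w (y.1, -y.2))) (ψ h x) := by
      intro x
      show Δ x * w (ψ h x) = -(Δ ((ψ h x).1, -(ψ h x).2) * w ((ψ h x).1, -(ψ h x).2))
      rw [hflip x, hwflip x]
      ring
    have hgkInt : Integrable (fun y : ((Fin m → ℝ) × (Fin m → ℝ)) => -(Δ (y.1, -y.2) * w (y.1, -y.2))) := by
      have : (fun y : ((Fin m → ℝ) × (Fin m → ℝ)) => -(Δ (y.1, -y.2) * w (y.1, -y.2)))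
          = (fun z => -(Δ z * w z)) ∘ Se := rfl
      rw [this]
      exact (hSmp.integrable_comp_emb Se.measurableEmbedding).mpr hkInt.neg
    have hgkint_eq : ∫ y : ((Fin m → ℝ) × (Fin m → ℝ)), -(Δ (y.1, -y.2) * w (y.1, -y.2))
        = -∫ x, Δ x * w x := by
      have h1 : ∫ y : ((Fin m → ℝ) × (Fin m → ℝ)), -(Δ (y.1, -y.2) * w (y.1, -y.2))
          = ∫ y, (fun z => -(Δ z * w z)) (Se y) := rfl
      have h2 := hSmp.integral_comp Se.measurableEmbedding (fun z => -(Δ z * w z))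
      rw [h1, h2, integral_neg]
    have huInt : Integrable (fun x => Δ x * w (ψ h x)) := by
      have h1 : (fun x => Δ x * w (ψ h x))
          = (fun y : ((Fin m → ℝ) × (Fin m → ℝ)) => -(Δ (y.1, -y.2) * w (y.1, -y.2))) ∘ ψe := by
        funext x
        exact hgk x
      rw [h1]
      exact (hψemp.integrable_comp_emb ψe.measurableEmbedding).mpr hgkInt
    have huEq : ∫ x, Δ x * w (ψ h x) = -∫ x, Δ x * w x := by
      have h1 : ∫ x, Δ x * w (ψ h x)
          = ∫ x, (fun y : ((Fin m → ℝ) × (Fin m → ℝ)) => -(Δ (y.1, -y.2) * w (y.1, -y.2))) (ψe x) := by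
        congr 1
        funext x
        exact hgk x
      have h2 := hψemp.integral_comp ψe.measurableEmbedding
        (fun y : ((Fin m → ℝ) × (Fin m → ℝ)) => -(Δ (y.1, -y.2) * w (y.1, -y.2)))
      rw [h1, h2, hgkint_eq]
    -- same with Δ²
    have hgv : ∀ x, Δ x ^ 2 * w (ψ h x)
        = (fun y : ((Fin m → ℝ) × (Fin m → ℝ)) => Δ (y.1, -y.2) ^ 2 * w (y.1, -y.2)) (ψ h x) := by
      intro x
      show Δ x ^ 2 * w (ψ h x) = Δ ((ψ h x).1, -(ψ h x).2) ^ 2 * w ((ψ h x).1, -(ψ h x).2)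
      rw [hflip x, hwflip x]
      ring
    have hgvInt : Integrable (fun y : ((Fin m → ℝ) × (Fin m → ℝ)) => Δ (y.1, -y.2) ^ 2 * w (y.1, -y.2)) := by
      have : (fun y : ((Fin m → ℝ) × (Fin m → ℝ)) => Δ (y.1, -y.2) ^ 2 * w (y.1, -y.2))
          = (fun z => Δ z ^ 2 * w z) ∘ Se := rfl
      rw [this]
      exact (hSmp.integrable_comp_emb Se.measurableEmbedding).mpr hΔ2Int
    have hvInt : Integrable (fun x => Δ x ^ 2 * w (ψ h x)) := by
      have h1 : (fun x => Δ x ^ 2 * w (ψ h x))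
          = (fun y : ((Fin m → ℝ) × (Fin m → ℝ)) => Δ (y.1, -y.2) ^ 2 * w (y.1, -y.2)) ∘ ψe := by
        funext x
        exact hgv x
      rw [h1]
      exact (hψemp.integrable_comp_emb ψe.measurableEmbedding).mpr hgvInt
    have hvEq : ∫ x, Δ x ^ 2 * w (ψ h x) = ∫ x, Δ x ^ 2 * w x := by
      have h1 : ∫ x, Δ x ^ 2 * w (ψ h x)
          = ∫ x, (fun y : ((Fin m → ℝ) × (Fin m → ℝ)) => Δ (y.1, -y.2) ^ 2 * w (y.1, -y.2)) (ψe x) := by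
        congr 1
        funext x
        exact hgv x
      have h1' := hψemp.integral_comp ψe.measurableEmbedding
        (fun y : ((Fin m → ℝ) × (Fin m → ℝ)) => Δ (y.1, -y.2) ^ 2 * w (y.1, -y.2))
      rw [h1, h1']
      have h2 : ∫ y : ((Fin m → ℝ) × (Fin m → ℝ)), Δ (y.1, -y.2) ^ 2 * w (y.1, -y.2)
          = ∫ y, (fun z => Δ z ^ 2 * w z) (Se y) := rfl
      have h3 := hSmp.integral_comp Se.measurableEmbedding (fun z => Δ z ^ 2 * w z)
      rw [h2, h3]
    -- 2μ = ∫ Δ (w - w∘ψ)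
    have h2mu : ∫ x, (Δ x * w x - Δ x * w (ψ h x)) = 2 * ∫ x, Δ x * w x := by
      rw [integral_sub hkInt huInt, huEq]
      ring
    -- pointwise bound on the integrand
    have hptw : ∀ x, |Δ x * w x - Δ x * w (ψ h x)| ≤ Δ x ^ 2 * w x + Δ x ^ 2 * w (ψ h x) := by
      intro x
      have h1 : |Δ x * w x - Δ x * w (ψ h x)| = |Δ x| * |w x - w (ψ h x)| := by
        rw [← abs_mul]
        congr 1
        ring
      rw [h1]
      have h2 : |w x - w (ψ h x)| ≤ |(-H x) - (-H (ψ h x))| * (w x + w (ψ h x)) :=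
        exp_diff_le_aux (-H x) (-H (ψ h x))
      have h3 : |(-H x) - (-H (ψ h x))| = |Δ x| := by
        have e : (-H x) - (-H (ψ h x)) = H (ψ h x) - H x := by ring
        rw [e]
      rw [h3] at h2
      calc |Δ x| * |w x - w (ψ h x)| ≤ |Δ x| * (|Δ x| * (w x + w (ψ h x))) :=
            mul_le_mul_of_nonneg_left h2 (abs_nonneg _)
        _ = Δ x ^ 2 * w x + Δ x ^ 2 * w (ψ h x) := by
            rw [← sq_abs (Δ x)]
            ring
    -- put everything together
    have hbound : |2 * ∫ x, Δ x * w x| ≤ 2 * (h ^ 4 * ∫ x, D x * w x) := by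
      rw [← h2mu]
      calc |∫ x, (Δ x * w x - Δ x * w (ψ h x))|
          ≤ ∫ x, |Δ x * w x - Δ x * w (ψ h x)| := by
            simpa [Real.norm_eq_abs] using
              norm_integral_le_integral_norm (fun x => Δ x * w x - Δ x * w (ψ h x))
        _ ≤ ∫ x, (Δ x ^ 2 * w x + Δ x ^ 2 * w (ψ h x)) := by
            refine integral_mono ((hkInt.sub huInt).abs) (hΔ2Int.add hvInt) fun x => hptw x
        _ = (∫ x, Δ x ^ 2 * w x) + ∫ x, Δ x ^ 2 * w (ψ h x) := integral_add hΔ2Int hvInt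
        _ = (∫ x, Δ x ^ 2 * w x) + ∫ x, Δ x ^ 2 * w x := by rw [hvEq]
        _ ≤ 2 * (h ^ 4 * ∫ x, D x * w x) := by linarith [hΔ2le]
    have := abs_le.mp hbound
    rw [abs_le]
    constructor <;> [linarith [this.1]; linarith [this.2]]
  -- Part C : the squared mean term vanishes
  set C : ℝ := ∫ x, D x * w x with hCdef
  have hCnn : 0 ≤ C := integral_nonneg fun x => mul_nonneg (hDnn x) (hwpos x).le
  have hμ2 : Tendsto (fun h : ℝ => (∫ x, (H (ψ h x) - H x) * w x) ^ 2 / h ^ 4)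
      (nhdsWithin (0:ℝ) (Set.Ioi 0)) (nhds 0) := by
    apply squeeze_zero' (g := fun h : ℝ => h ^ 4 * C ^ 2)
    · filter_upwards [hIoc] with h hh
      have : (0:ℝ) < h ^ 4 := pow_pos hh.1 4
      positivity
    · filter_upwards [hIoc] with h hh
      have h4 : (0:ℝ) < h ^ 4 := pow_pos hh.1 4
      rw [div_le_iff₀ h4]
      have hb := key h hh
      calc (∫ x, (H (ψ h x) - H x) * w x) ^ 2
          = |∫ x, (H (ψ h x) - H x) * w x| ^ 2 := (sq_abs _).symm
        _ ≤ (h ^ 4 * C) ^ 2 := pow_le_pow_left₀ (abs_nonneg _) hb 2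
        _ = h ^ 4 * C ^ 2 * h ^ 4 := by ring
    · have h1 : Tendsto (fun h : ℝ => h ^ 4 * C ^ 2) (nhds 0) (nhds (0 ^ 4 * C ^ 2)) :=
        ((continuous_pow 4).tendsto 0).mul_const (C ^ 2)
      have h2 := h1.mono_left (nhdsWithin_le_nhds (s := Set.Ioi (0:ℝ)))
      simpa using h2
  refine ⟨first, ?_⟩
  have heq2 : (fun h : ℝ =>
      ((∫ x, (H (ψ h x) - H x) ^ 2 * w x) - (∫ x, (H (ψ h x) - H x) * w x) ^ 2) / h ^ 4)
      = fun h : ℝ => (∫ x, (H (ψ h x) - H x) ^ 2 * w x) / h ^ 4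
          - (∫ x, (H (ψ h x) - H x) * w x) ^ 2 / h ^ 4 := by
    funext h
    ring
  rw [heq2]
  simpa using first.sub hμ2
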